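/- Suppose f is ε-far from monotone and admits a KMS bipartite subgraph G = (A, B, E) of violating edges with |B| = σ·2^n, every vertex of B having degree exactly d, every vertex of A having degree at most 2d, and σ²d ≥ c·ε²/log⁴ n. If ℓ* satisfies 2ℓ*·I(f)/n ≤ σ/4, then the number of violating edges in E both of whose endpoints are ℓ*-sticky is at least σd·2^n/2. -/

import Mathlib

open Finset

open scoped Classical

/-- Vertices of the hypercube `{0,1}^n`. -/
abbrev Cube (n : ℕ) := Fin n → Bool

/-- Flip coordinate `i` of `x`. -/
def flipCoord {n : ℕ} (x : Cube n) (i : Fin n) : Cube n := Function.update x i (!(x i))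

/-- Position after `t` steps of the walk starting at `x` with step list `w`. -/
def posAt {n : ℕ} (x : Cube n) (w : List (Fin n)) (t : ℕ) : Cube n :=
  (w.take t).foldl flipCoord x

/-- The `t`-th traversed edge (0-indexed) of the walk is influential. -/
def influentialStep {n : ℕ} (f : Cube n → Bool) (x : Cube n) (w : List (Fin n)) (t : ℕ) : Prop :=
  f (posAt x w t) ≠ f (posAt x w (t + 1))

/-- The walk from `x` with steps `w` traverses some influential edge. -/
def hits {n : ℕ} (f : Cube n → Bool) (x : Cube n) {ℓ : ℕ} (w : Fin ℓ → Fin n) : Prop :=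
  ∃ t, t < ℓ ∧ influentialStep f x (List.ofFn w) t

/-- `x` is `ℓ`-sticky: a uniform length-`ℓ` walk from `x` avoids influential edges w.p. ≥ 1/2. -/
def sticky {n : ℕ} (f : Cube n → Bool) (ℓ : ℕ) (x : Cube n) : Prop :=
  (1 / 2 : ℝ) ≤ ((univ.filter fun w : Fin ℓ → Fin n => ¬ hits f x w).card : ℝ) / (n : ℝ) ^ ℓ

/-- Total influence `I(f) = n · Pr[f x ≠ f y]` over uniform ordered Hamming-distance-1 pairs. -/
noncomputable def totalInfluence (n : ℕ) (f : Cube n → Bool) : ℝ :=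
  (n : ℝ) * (((univ.filter fun p : Cube n × Cube n =>
      hammingDist p.1 p.2 = 1 ∧ f p.1 ≠ f p.2).card : ℝ) / ((n : ℝ) * 2 ^ n))

/-- `p` is a violating (directed upward) edge: `p.1 ≺ p.2`, `f p.1 = 1`, `f p.2 = 0`. -/
def violating {n : ℕ} (f : Cube n → Bool) (p : Cube n × Cube n) : Prop :=
  hammingDist p.1 p.2 = 1 ∧ p.1 ≤ p.2 ∧ f p.1 = true ∧ f p.2 = false

/-- The set `F_ℓ` of violating edges both of whose endpoints are `ℓ`-sticky. -/
noncomputable def Fset {n : ℕ} (f : Cube n → Bool) (ℓ : ℕ) : Finset (Cube n × Cube n) :=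
  univ.filter fun p => violating f p ∧ sticky f ℓ p.1 ∧ sticky f ℓ p.2

/-- The `t`-th traversed edge of the walk equals the (undirected) edge `q`. -/
def matchAt {n : ℕ} (x : Cube n) (w : List (Fin n)) (t : ℕ) (q : Cube n × Cube n) : Prop :=
  (posAt x w t = q.1 ∧ posAt x w (t + 1) = q.2) ∨
  (posAt x w t = q.2 ∧ posAt x w (t + 1) = q.1)
section Aux
variable {n : ℕ}

lemma flipCoord_flipCoord (x : Cube n) (i : Fin n) : flipCoord (flipCoord x i) i = x := by
  funext j
  by_cases h : j = i
  · subst h; simp [flipCoord]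
  · simp [flipCoord, Function.update_of_ne h]

lemma flipCoord_apply_self (x : Cube n) (i : Fin n) : flipCoord x i i = !(x i) := by
  simp [flipCoord]

lemma flipCoord_apply_ne (x : Cube n) {i j : Fin n} (h : j ≠ i) : flipCoord x i j = x j := by
  simp [flipCoord, Function.update_of_ne h]

lemma foldl_flip_inj (L : List (Fin n)) :
    Function.Injective (fun x : Cube n => L.foldl flipCoord x) := by
  induction L with
  | nil => exact fun a b h => h
  | cons a l ih =>
    intro x y h
    simp only [List.foldl_cons] at h
    have h2 := ih h
    have h3 := congrArg (fun z => flipCoord z a) h2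
    simpa [flipCoord_flipCoord] using h3

lemma posAt_bijective (w : List (Fin n)) (t : ℕ) :
    Function.Bijective (fun x : Cube n => posAt x w t) :=
  Finite.injective_iff_bijective.1 (foldl_flip_inj (w.take t))

lemma posAt_succ (x : Cube n) (w : List (Fin n)) (t : ℕ) (ht : t < w.length) :
    posAt x w (t + 1) = flipCoord (posAt x w t) (w.get ⟨t, ht⟩) := by
  unfold posAt
  have h : w.take (t+1) = w.take t ++ [w.get ⟨t, ht⟩] := by
    rw [List.take_succ, List.getElem?_eq_getElem ht]
    simp
  rw [h, List.foldl_append, List.foldl_cons, List.foldl_nil]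

lemma card_infl (f : Cube n → Bool) {ℓ : ℕ} (w : Fin ℓ → Fin n) (t : ℕ) (ht : t < ℓ) :
    (univ.filter fun x : Cube n => influentialStep f x (List.ofFn w) t).card
      = (univ.filter fun y : Cube n => f y ≠ f (flipCoord y (w ⟨t, ht⟩))).card := by
  have hlen : t < (List.ofFn w).length := by simpa using ht
  have key : ∀ x : Cube n, influentialStep f x (List.ofFn w) t ↔
      f (posAt x (List.ofFn w) t) ≠ f (flipCoord (posAt x (List.ofFn w) t) (w ⟨t, ht⟩)) := by
    intro x
    unfold influentialStep
    rw [posAt_succ x _ t hlen]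
    rw [List.get_ofFn]
    rfl
  have hg := posAt_bijective (n := n) (List.ofFn w) t
  apply Finset.card_bij (fun x _ => posAt x (List.ofFn w) t)
  · intro a ha
    simp only [mem_filter, mem_univ, true_and] at ha ⊢
    exact (key a).1 ha
  · intro a _ b _ h
    exact hg.1 h
  · intro y hy
    simp only [mem_filter, mem_univ, true_and] at hy
    obtain ⟨x, hx⟩ := hg.2 y
    have hx' : posAt x (List.ofFn w) t = y := hx
    refine ⟨x, ?_, hx⟩
    simp only [mem_filter, mem_univ, true_and]
    rw [key x, hx']
    exact hy

lemma sum_eval {ℓ : ℕ} (t : Fin ℓ) (g : Fin n → ℕ) :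
    n * ∑ w : Fin ℓ → Fin n, g (w t) = n ^ ℓ * ∑ i, g i := by
  classical
  set e := Equiv.piSplitAt t (fun _ : Fin ℓ => Fin n)
  have h1 : ∑ w : Fin ℓ → Fin n, g (w t) = ∑ p : Fin n × ({j : Fin ℓ // j ≠ t} → Fin n), g p.1 := by
    refine Fintype.sum_equiv e _ _ (fun w => ?_)
    rfl
  have h2 : ∑ p : Fin n × ({j : Fin ℓ // j ≠ t} → Fin n), g p.1
      = Fintype.card ({j : Fin ℓ // j ≠ t} → Fin n) * ∑ i, g i := by
    rw [Fintype.sum_prod_type]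
    simp only [Finset.sum_const, smul_eq_mul, Finset.card_univ]
    rw [Finset.mul_sum]
  have h3 : n ^ ℓ = n * Fintype.card ({j : Fin ℓ // j ≠ t} → Fin n) := by
    have hc := Fintype.card_congr e
    simpa using hc
  rw [h1, h2, ← mul_assoc, ← h3]

lemma hamming_one_iff (y z : Cube n) :
    hammingDist y z = 1 ↔ ∃ i, z = flipCoord y i := by
  constructor
  · intro h
    rw [hammingDist, Finset.card_eq_one] at h
    obtain ⟨i, hi⟩ := h
    refine ⟨i, funext fun j => ?_⟩
    by_cases hj : j = i
    · subst hj
      have : y j ≠ z j := by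
        have : j ∈ ({j} : Finset (Fin n)) := mem_singleton_self j
        rw [← hi, mem_filter] at this
        exact this.2
      rw [flipCoord_apply_self]
      cases hy : y j <;> cases hz : z j <;> simp_all
    · have : z j = y j := by
        by_contra hne
        have : j ∈ univ.filter fun k => y k ≠ z k := by
          simp only [mem_filter, mem_univ, true_and]
          exact fun h => hne h.symm
        rw [hi, mem_singleton] at this
        exact hj this
      rw [flipCoord_apply_ne y hj, this]
  · rintro ⟨i, rfl⟩
    rw [hammingDist]
    have : (univ.filter fun j => y j ≠ flipCoord y i j) = {i} := by
      ext j
      simp only [mem_filter, mem_univ, true_and, mem_singleton]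
      by_cases hj : j = i
      · subst hj; simp [flipCoord_apply_self]
      · simp [flipCoord_apply_ne y hj, hj]
    rw [this, card_singleton]

lemma flip_inj (y : Cube n) {i i' : Fin n} (h : flipCoord y i = flipCoord y i') : i = i' := by
  by_contra hne
  have := congrFun h i
  rw [flipCoord_apply_self, flipCoord_apply_ne y hne] at this
  cases y i <;> simp_all

lemma pairCount (f : Cube n → Bool) :
    ∑ i : Fin n, (univ.filter fun y : Cube n => f y ≠ f (flipCoord y i)).card
      = (univ.filter fun p : Cube n × Cube n => hammingDist p.1 p.2 = 1 ∧ f p.1 ≠ f p.2).card := by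
  classical
  have h1 : ((univ : Finset (Cube n × Fin n)).filter fun q => f q.1 ≠ f (flipCoord q.1 q.2)).card
      = ∑ i : Fin n, (univ.filter fun y : Cube n => f y ≠ f (flipCoord y i)).card := by
    rw [Finset.card_eq_sum_card_fiberwise (f := fun q : Cube n × Fin n => q.2) (t := univ)
      (fun q _ => mem_univ _)]
    refine Finset.sum_congr rfl fun i _ => ?_
    refine Finset.card_nbij' (fun q => q.1) (fun y => (y, i)) ?_ ?_ ?_ ?_
    · intro q hq
      simp only [Finset.mem_coe, mem_filter, mem_univ, true_and] at hq ⊢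
      rw [← hq.2]
      exact hq.1
    · intro y hy
      simp only [Finset.mem_coe, mem_filter, mem_univ, true_and] at hy ⊢
      exact ⟨hy, trivial⟩
    · intro q hq
      simp only [Finset.mem_coe, mem_filter, mem_univ, true_and] at hq
      exact Prod.ext rfl hq.2.symm
    · intro y _; rfl
  rw [← h1]
  apply Finset.card_bij (fun q _ => (q.1, flipCoord q.1 q.2))
  · intro q hq
    simp only [mem_filter, mem_univ, true_and] at hq ⊢
    exact ⟨(hamming_one_iff _ _).2 ⟨q.2, rfl⟩, hq⟩
  · intro a ha b hb h
    simp only [Prod.mk.injEq] at h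
    obtain ⟨h1', h2'⟩ := h
    have : a.2 = b.2 := flip_inj a.1 (by rw [h2', h1'])
    exact Prod.ext h1' this
  · intro p hp
    simp only [mem_filter, mem_univ, true_and] at hp
    obtain ⟨hd, hf⟩ := hp
    obtain ⟨i, hi⟩ := (hamming_one_iff p.1 p.2).1 hd
    refine ⟨(p.1, i), ?_, ?_⟩
    · simp only [mem_filter, mem_univ, true_and]
      rw [← hi]; exact hf
    · simp [← hi]

end Aux

lemma sticky_count {n : ℕ} (f : Cube n → Bool) (hn : 0 < n) (ℓ : ℕ) :
    n * (univ.filter fun x : Cube n => ¬ sticky f ℓ x).card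
      ≤ 2 * ℓ * (univ.filter fun p : Cube n × Cube n =>
          hammingDist p.1 p.2 = 1 ∧ f p.1 ≠ f p.2).card := by
  classical
  set S := univ.filter fun x : Cube n => ¬ sticky f ℓ x with hSdef
  set H : Cube n → ℕ := fun x => (univ.filter fun w : Fin ℓ → Fin n => hits f x w).card with hHdef
  have hcard : ∀ x : Cube n,
      (univ.filter fun w : Fin ℓ → Fin n => hits f x w).card
        + (univ.filter fun w : Fin ℓ → Fin n => ¬ hits f x w).card = n ^ ℓ := by
    intro x
    rw [Finset.card_filter_add_card_filter_not]
    simp [Finset.card_univ]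
  -- step 1: for x in S, n^ℓ ≤ 2 * H x
  have step1 : ∀ x ∈ S, n ^ ℓ ≤ 2 * H x := by
    intro x hx
    rw [hSdef, mem_filter] at hx
    have hns := hx.2
    rw [sticky, not_le] at hns
    have hpow : (0:ℝ) < (n:ℝ) ^ ℓ := by positivity
    rw [div_lt_iff₀ hpow] at hns
    have h2 : 2 * (univ.filter fun w : Fin ℓ → Fin n => ¬ hits f x w).card < n ^ ℓ := by
      have : ((2 * (univ.filter fun w : Fin ℓ → Fin n => ¬ hits f x w).card : ℕ) : ℝ)
          < ((n ^ ℓ : ℕ) : ℝ) := by push_cast; nlinarith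
      exact_mod_cast this
    have h3 := hcard x
    show n ^ ℓ ≤ 2 * (univ.filter fun w : Fin ℓ → Fin n => hits f x w).card
    omega
  -- step 2
  have step2 : S.card * n ^ ℓ ≤ ∑ x ∈ S, 2 * H x := by
    calc S.card * n ^ ℓ = ∑ _x ∈ S, n ^ ℓ := by rw [Finset.sum_const, smul_eq_mul]
      _ ≤ ∑ x ∈ S, 2 * H x := Finset.sum_le_sum step1
  have step2' : S.card * n ^ ℓ ≤ 2 * ∑ x : Cube n, H x := by
    refine step2.trans ?_
    rw [← Finset.mul_sum]
    exact Nat.mul_le_mul_left 2 (Finset.sum_le_sum_of_subset (Finset.subset_univ S))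
  -- step 3: H x ≤ ∑ t in range ℓ, (count of influential w)
  have step3 : ∀ x : Cube n, H x ≤ ∑ t ∈ Finset.range ℓ,
      (univ.filter fun w : Fin ℓ → Fin n => influentialStep f x (List.ofFn w) t).card := by
    intro x
    have hsub : (univ.filter fun w : Fin ℓ → Fin n => hits f x w)
        ⊆ (Finset.range ℓ).biUnion fun t =>
            univ.filter fun w : Fin ℓ → Fin n => influentialStep f x (List.ofFn w) t := by
      intro w hw
      rw [mem_filter] at hw
      obtain ⟨t, ht, hinf⟩ := hw.2
      rw [mem_biUnion]
      exact ⟨t, Finset.mem_range.2 ht, by simp [hinf]⟩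
    exact (Finset.card_le_card hsub).trans Finset.card_biUnion_le
  -- swap sums
  have swap : ∀ t : ℕ, ∑ x : Cube n,
      (univ.filter fun w : Fin ℓ → Fin n => influentialStep f x (List.ofFn w) t).card
      = ∑ w : Fin ℓ → Fin n,
      (univ.filter fun x : Cube n => influentialStep f x (List.ofFn w) t).card := by
    intro t
    simp only [Finset.card_filter]
    exact Finset.sum_comm
  -- per-step bound
  set D := ∑ i : Fin n, (univ.filter fun y : Cube n => f y ≠ f (flipCoord y i)).card with hD
  have step5 : ∀ t ∈ Finset.range ℓ, n * ∑ w : Fin ℓ → Fin n,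
      (univ.filter fun x : Cube n => influentialStep f x (List.ofFn w) t).card = n ^ ℓ * D := by
    intro t ht
    rw [Finset.mem_range] at ht
    have : ∀ w : Fin ℓ → Fin n,
        (univ.filter fun x : Cube n => influentialStep f x (List.ofFn w) t).card
        = (univ.filter fun y : Cube n => f y ≠ f (flipCoord y (w ⟨t, ht⟩))).card :=
      fun w => card_infl f w t ht
    rw [Finset.sum_congr rfl fun w _ => this w]
    exact sum_eval (⟨t, ht⟩ : Fin ℓ) (fun i => (univ.filter fun y : Cube n => f y ≠ f (flipCoord y i)).card)
  -- combine
  have main : n * (S.card * n ^ ℓ) ≤ 2 * ℓ * (n ^ ℓ * D) := by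
    calc n * (S.card * n ^ ℓ) ≤ n * (2 * ∑ x : Cube n, H x) :=
          Nat.mul_le_mul_left n step2'
      _ ≤ n * (2 * ∑ x : Cube n, ∑ t ∈ Finset.range ℓ,
            (univ.filter fun w : Fin ℓ → Fin n => influentialStep f x (List.ofFn w) t).card) := by
          exact Nat.mul_le_mul_left n (Nat.mul_le_mul_left 2 (Finset.sum_le_sum fun x _ => step3 x))
      _ = 2 * ∑ t ∈ Finset.range ℓ, (n * ∑ w : Fin ℓ → Fin n,
            (univ.filter fun x : Cube n => influentialStep f x (List.ofFn w) t).card) := by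
          rw [Finset.sum_comm]
          simp only [← swap]
          simp only [← Finset.sum_mul, ← Finset.mul_sum]
          ring
      _ = 2 * ∑ _t ∈ Finset.range ℓ, n ^ ℓ * D := by
          rw [Finset.sum_congr rfl step5]
      _ = 2 * ℓ * (n ^ ℓ * D) := by
          rw [Finset.sum_const, Finset.card_range, smul_eq_mul]; ring
  have hpow : 0 < n ^ ℓ := Nat.pow_pos hn
  have : n * S.card * n ^ ℓ ≤ 2 * ℓ * D * n ^ ℓ := by
    calc n * S.card * n ^ ℓ = n * (S.card * n ^ ℓ) := by ring
      _ ≤ 2 * ℓ * (n ^ ℓ * D) := main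
      _ = 2 * ℓ * D * n ^ ℓ := by ring
  have hfin : n * S.card ≤ 2 * ℓ * D := Nat.le_of_mul_le_mul_right this hpow
  calc n * S.card ≤ 2 * ℓ * D := hfin
    _ = 2 * ℓ * (univ.filter fun p : Cube n × Cube n =>
          hammingDist p.1 p.2 = 1 ∧ f p.1 ≠ f p.2).card := by rw [hD, pairCount]


/-- given a KMS bipartite subgraph `(A, B, E)` of violating edges with
`|B| = σ·2^n`, `B`-degrees exactly `d`, `A`-degrees at most `2d`, `σ²d ≥ c·ε²/log⁴ n`, for a
function `f` that is `ε`-far from monotone, if `2ℓ*·I(f)/n ≤ σ/4` then at least `σd·2^n/2`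
edges of `E` have both endpoints `ℓ*`-sticky. -/
theorem kms_sticky_edges (n : ℕ) (hn : 0 < n) (f : Cube n → Bool) (ε σ c : ℝ) (d ℓstar : ℕ)
    (A B : Finset (Cube n)) (E : Finset (Cube n × Cube n))
    (hε : 0 < ε) (hc : 0 < c) (hσ : 0 < σ)
    (hfar : ∀ g : Cube n → Bool, (∀ x y : Cube n, x ≤ y → g x ≤ g y) →
      ε ≤ ((univ.filter fun x : Cube n => f x ≠ g x).card : ℝ) / 2 ^ n)
    (hE : ∀ p ∈ E, p.1 ∈ A ∧ p.2 ∈ B ∧ violating f p)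
    (hB : (B.card : ℝ) = σ * 2 ^ n)
    (hdegB : ∀ b ∈ B, (E.filter fun p => p.2 = b).card = d)
    (hdegA : ∀ a ∈ A, (E.filter fun p => p.1 = a).card ≤ 2 * d)
    (hσd : c * ε ^ 2 / (Real.log n) ^ 4 ≤ σ ^ 2 * d)
    (hℓ : 2 * ℓstar * totalInfluence n f / n ≤ σ / 4) :
    σ * d * 2 ^ n / 2
      ≤ ((E.filter fun p => sticky f ℓstar p.1 ∧ sticky f ℓstar p.2).card : ℝ) := by
  classical
  set S : Finset (Cube n) := univ.filter fun x => ¬ sticky f ℓstar x with hSdef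
  set P : ℕ := (univ.filter fun p : Cube n × Cube n =>
      hammingDist p.1 p.2 = 1 ∧ f p.1 ≠ f p.2).card with hPdef
  -- bound on |S|
  have hnR : (0:ℝ) < n := by exact_mod_cast hn
  have h2n : (0:ℝ) < 2 ^ n := by positivity
  have hI : totalInfluence n f = (P : ℝ) / 2 ^ n := by
    rw [totalInfluence, ← hPdef]
    field_simp
  have hcount : (n : ℝ) * S.card ≤ 2 * ℓstar * P := by
    have := sticky_count f hn ℓstar
    exact_mod_cast this
  have hScard : (S.card : ℝ) ≤ σ / 4 * 2 ^ n := by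
    rw [hI] at hℓ
    rw [div_le_iff₀ hnR] at hℓ
    -- hℓ : 2 * ℓstar * (P / 2^n) ≤ σ/4 * n
    have h1 : 2 * (ℓstar:ℝ) * P ≤ σ / 4 * n * 2 ^ n := by
      have := mul_le_mul_of_nonneg_right hℓ (le_of_lt h2n)
      calc 2 * (ℓstar:ℝ) * P = 2 * ℓstar * ((P:ℝ) / 2 ^ n) * 2 ^ n := by
            field_simp
        _ ≤ σ / 4 * n * 2 ^ n := this
    have h2 : (n : ℝ) * S.card ≤ σ / 4 * n * 2 ^ n := le_trans hcount h1
    rw [show σ / 4 * (n:ℝ) * 2 ^ n = (n:ℝ) * (σ / 4 * 2 ^ n) by ring] at h2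
    exact le_of_mul_le_mul_left h2 hnR
  -- |E| = σ d 2^n
  have hEcard : (E.card : ℝ) = σ * d * 2 ^ n := by
    have h : E.card = B.card * d := by
      rw [Finset.card_eq_sum_card_fiberwise (f := fun p : Cube n × Cube n => p.2) (t := B)
        (fun p hp => (hE p hp).2.1)]
      rw [Finset.sum_congr rfl (fun b hb => hdegB b hb), Finset.sum_const, smul_eq_mul]
    rw [h]
    push_cast
    rw [hB]
    ring
  -- degree bound
  have hdeg : ∀ v : Cube n, (E.filter fun p => p.1 = v ∨ p.2 = v).card ≤ 2 * d := by
    intro v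
    by_cases hv : f v = true
    · have heq : E.filter (fun p => p.1 = v ∨ p.2 = v) = E.filter (fun p => p.1 = v) := by
        refine Finset.filter_congr fun p hp => ?_
        have hf2 : f p.2 = false := (hE p hp).2.2.2.2.2
        constructor
        · rintro (h | h)
          · exact h
          · rw [h] at hf2; rw [hv] at hf2; exact absurd hf2 (by simp)
        · exact fun h => Or.inl h
      rw [heq]
      by_cases hvA : v ∈ A
      · exact hdegA v hvA
      · have : E.filter (fun p => p.1 = v) = ∅ := by
          rw [Finset.filter_eq_empty_iff]
          intro p hp hpv
          exact hvA (hpv ▸ (hE p hp).1)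
        simp [this]
    · have hvf : f v = false := by cases h : f v; rfl; exact absurd h hv
      have heq : E.filter (fun p => p.1 = v ∨ p.2 = v) = E.filter (fun p => p.2 = v) := by
        refine Finset.filter_congr fun p hp => ?_
        have hf1 : f p.1 = true := (hE p hp).2.2.2.2.1
        constructor
        · rintro (h | h)
          · rw [h] at hf1; rw [hvf] at hf1; exact absurd hf1 (by simp)
          · exact h
        · exact fun h => Or.inr h
      rw [heq]
      by_cases hvB : v ∈ B
      · rw [hdegB v hvB]; omega
      · have : E.filter (fun p => p.2 = v) = ∅ := by
          rw [Finset.filter_eq_empty_iff]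
          intro p hp hpv
          exact hvB (hpv ▸ (hE p hp).2.1)
        simp [this]
  -- bad edges
  set Bad : Finset (Cube n × Cube n) :=
    E.filter (fun p => ¬ (sticky f ℓstar p.1 ∧ sticky f ℓstar p.2)) with hBadDef
  have hBadsub : Bad ⊆ S.biUnion fun v => E.filter fun p => p.1 = v ∨ p.2 = v := by
    intro p hp
    rw [hBadDef, Finset.mem_filter] at hp
    obtain ⟨hpE, hns⟩ := hp
    rw [Finset.mem_biUnion]
    by_cases h1 : sticky f ℓstar p.1
    · have h2 : ¬ sticky f ℓstar p.2 := fun h2 => hns ⟨h1, h2⟩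
      exact ⟨p.2, by rw [hSdef, Finset.mem_filter]; exact ⟨Finset.mem_univ _, h2⟩,
        by rw [Finset.mem_filter]; exact ⟨hpE, Or.inr rfl⟩⟩
    · exact ⟨p.1, by rw [hSdef, Finset.mem_filter]; exact ⟨Finset.mem_univ _, h1⟩,
        by rw [Finset.mem_filter]; exact ⟨hpE, Or.inl rfl⟩⟩
  have hBadcard : Bad.card ≤ S.card * (2 * d) := by
    calc Bad.card ≤ (S.biUnion fun v => E.filter fun p => p.1 = v ∨ p.2 = v).card :=
          Finset.card_le_card hBadsub
      _ ≤ ∑ v ∈ S, (E.filter fun p => p.1 = v ∨ p.2 = v).card := Finset.card_biUnion_le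
      _ ≤ ∑ _v ∈ S, 2 * d := Finset.sum_le_sum fun v _ => hdeg v
      _ = S.card * (2 * d) := by rw [Finset.sum_const, smul_eq_mul]
  -- combine
  have hsplit : (E.filter fun p => sticky f ℓstar p.1 ∧ sticky f ℓstar p.2).card + Bad.card
      = E.card := by
    rw [hBadDef]
    exact Finset.card_filter_add_card_filter_not _
  have hBadR : (Bad.card : ℝ) ≤ σ / 4 * 2 ^ n * (2 * d) := by
    calc (Bad.card : ℝ) ≤ (S.card : ℝ) * (2 * d) := by exact_mod_cast hBadcard
      _ ≤ σ / 4 * 2 ^ n * (2 * d) := by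
          apply mul_le_mul_of_nonneg_right hScard
          positivity
  have hgood : ((E.filter fun p => sticky f ℓstar p.1 ∧ sticky f ℓstar p.2).card : ℝ)
      = (E.card : ℝ) - Bad.card := by
    have := hsplit
    push_cast [← this]
    ring
  rw [hgood, hEcard]
  nlinarith [hBadR]
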